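/- arXiv:1303.4150 — 2 statements merged into one kernel-verified Lean document; each statement's English description precedes it below -/
import Mathlib

section
/- For n ≥ 5, there exist at least two distinct strings of length ∑_{k=1}^n k! over {1,...,n}, each beginning with 12⋯n, that contain every permutation of {1,...,n} as a contiguous substring. -/
set_option maxRecDepth 40000

abbrev Item := List ℕ × List ℕ

/-- rotation items: for j, item `(q.drop (j+1) ++ k :: q.take (j+1), [q.getD j 0])`. -/
def rots (k : ℕ) (q : List ℕ) : ℕ → ℕ → List Item
  | _, 0 => []
  | j, s+1 => (q.drop (j+1) ++ k :: q.take (j+1), [q.getD j 0]) :: rots k q (j+1) s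

def expand (k : ℕ) (p : Item) : List Item :=
  (p.1 ++ [k], p.2 ++ [k]) :: rots k p.1 0 p.1.length

def extend : List Item → ℕ → List Item
  | [], _ => []
  | p :: t, k => expand k p ++ extend t k

def Sfrom : List Item → List ℕ
  | [] => []
  | p :: t => p.2 ++ Sfrom t

def ChainOk : List ℕ → List Item → Prop
  | _, [] => True
  | m, p :: t => p.1 <:+ (m ++ p.2) ∧ ChainOk p.1 t

instance instDecChainOk : (m : List ℕ) → (c : List Item) → Decidable (ChainOk m c)
  | _, [] => .isTrue trivial
  | m, p :: t => by
      unfold ChainOk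
      exact @instDecidableAnd _ _ _ (instDecChainOk p.1 t)

def lastFst (m : List ℕ) (c : List Item) : List ℕ := (c.map Prod.fst).getLastD m

def insEv (a : ℕ) : List ℕ → List (List ℕ)
  | [] => [[a]]
  | b :: t => (a :: b :: t) :: (insEv a t).map (b :: ·)

def allPerms : List ℕ → List (List ℕ)
  | [] => [[]]
  | a :: t => ((allPerms t).map (insEv a)).flatten

lemma mem_insEv (a : ℕ) : ∀ (x y : List ℕ), (x ++ a :: y) ∈ insEv a (x ++ y)
  | [], [] => by simp [insEv]
  | [], b :: t => by simp [insEv]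
  | b :: x, y => by
      have hrec := mem_insEv a x y
      simp only [insEv, List.cons_append, List.mem_cons, List.mem_map]
      exact Or.inr ⟨_, hrec, rfl⟩

lemma mem_allPerms : ∀ (l w : List ℕ), List.Perm w l → w ∈ allPerms l
  | [], w, h => by simp [allPerms, h.eq_nil]
  | a :: t, w, h => by
      have ha : a ∈ w := h.mem_iff.mpr List.mem_cons_self
      obtain ⟨x, y, rfl⟩ := List.append_of_mem ha
      have h' : List.Perm (x ++ y) t := (List.perm_middle.symm.trans h).cons_inv
      have hm : (x ++ y) ∈ allPerms t := mem_allPerms t _ h'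
      simp only [allPerms, List.mem_flatten]
      exact ⟨insEv a (x ++ y), List.mem_map_of_mem hm, mem_insEv a x y⟩
def c5A : List (List ℕ × List ℕ) := [
  ([1,2,3,4,5],[1,2,3,4,5]),
  ([2,3,4,5,1],[1]),
  ([3,4,5,1,2],[2]),
  ([4,5,1,2,3],[3]),
  ([5,1,2,3,4],[4]),
  ([2,3,4,1,5],[1,5]),
  ([3,4,1,5,2],[2]),
  ([4,1,5,2,3],[3]),
  ([1,5,2,3,4],[4]),
  ([5,2,3,4,1],[1]),
  ([3,4,1,2,5],[2,5]),
  ([4,1,2,5,3],[3]),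
  ([1,2,5,3,4],[4]),
  ([2,5,3,4,1],[1]),
  ([5,3,4,1,2],[2]),
  ([4,1,2,3,5],[3,5]),
  ([1,2,3,5,4],[4]),
  ([2,3,5,4,1],[1]),
  ([3,5,4,1,2],[2]),
  ([5,4,1,2,3],[3]),
  ([2,3,1,4,5],[1,4,5]),
  ([3,1,4,5,2],[2]),
  ([1,4,5,2,3],[3]),
  ([4,5,2,3,1],[1]),
  ([5,2,3,1,4],[4]),
  ([3,1,4,2,5],[2,5]),
  ([1,4,2,5,3],[3]),
  ([4,2,5,3,1],[1]),
  ([2,5,3,1,4],[4]),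
  ([5,3,1,4,2],[2]),
  ([1,4,2,3,5],[3,5]),
  ([4,2,3,5,1],[1]),
  ([2,3,5,1,4],[4]),
  ([3,5,1,4,2],[2]),
  ([5,1,4,2,3],[3]),
  ([4,2,3,1,5],[1,5]),
  ([2,3,1,5,4],[4]),
  ([3,1,5,4,2],[2]),
  ([1,5,4,2,3],[3]),
  ([5,4,2,3,1],[1]),
  ([3,1,2,4,5],[2,4,5]),
  ([1,2,4,5,3],[3]),
  ([2,4,5,3,1],[1]),
  ([4,5,3,1,2],[2]),
  ([5,3,1,2,4],[4]),
  ([1,2,4,3,5],[3,5]),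
  ([2,4,3,5,1],[1]),
  ([4,3,5,1,2],[2]),
  ([3,5,1,2,4],[4]),
  ([5,1,2,4,3],[3]),
  ([2,4,3,1,5],[1,5]),
  ([4,3,1,5,2],[2]),
  ([3,1,5,2,4],[4]),
  ([1,5,2,4,3],[3]),
  ([5,2,4,3,1],[1]),
  ([4,3,1,2,5],[2,5]),
  ([3,1,2,5,4],[4]),
  ([1,2,5,4,3],[3]),
  ([2,5,4,3,1],[1]),
  ([5,4,3,1,2],[2]),
  ([2,1,3,4,5],[1,3,4,5]),
  ([1,3,4,5,2],[2]),
  ([3,4,5,2,1],[1]),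
  ([4,5,2,1,3],[3]),
  ([5,2,1,3,4],[4]),
  ([1,3,4,2,5],[2,5]),
  ([3,4,2,5,1],[1]),
  ([4,2,5,1,3],[3]),
  ([2,5,1,3,4],[4]),
  ([5,1,3,4,2],[2]),
  ([3,4,2,1,5],[1,5]),
  ([4,2,1,5,3],[3]),
  ([2,1,5,3,4],[4]),
  ([1,5,3,4,2],[2]),
  ([5,3,4,2,1],[1]),
  ([4,2,1,3,5],[3,5]),
  ([2,1,3,5,4],[4]),
  ([1,3,5,4,2],[2]),
  ([3,5,4,2,1],[1]),
  ([5,4,2,1,3],[3]),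
  ([1,3,2,4,5],[2,4,5]),
  ([3,2,4,5,1],[1]),
  ([2,4,5,1,3],[3]),
  ([4,5,1,3,2],[2]),
  ([5,1,3,2,4],[4]),
  ([3,2,4,1,5],[1,5]),
  ([2,4,1,5,3],[3]),
  ([4,1,5,3,2],[2]),
  ([1,5,3,2,4],[4]),
  ([5,3,2,4,1],[1]),
  ([2,4,1,3,5],[3,5]),
  ([4,1,3,5,2],[2]),
  ([1,3,5,2,4],[4]),
  ([3,5,2,4,1],[1]),
  ([5,2,4,1,3],[3]),
  ([4,1,3,2,5],[2,5]),
  ([1,3,2,5,4],[4]),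
  ([3,2,5,4,1],[1]),
  ([2,5,4,1,3],[3]),
  ([5,4,1,3,2],[2]),
  ([3,2,1,4,5],[1,4,5]),
  ([2,1,4,5,3],[3]),
  ([1,4,5,3,2],[2]),
  ([4,5,3,2,1],[1]),
  ([5,3,2,1,4],[4]),
  ([2,1,4,3,5],[3,5]),
  ([1,4,3,5,2],[2]),
  ([4,3,5,2,1],[1]),
  ([3,5,2,1,4],[4]),
  ([5,2,1,4,3],[3]),
  ([1,4,3,2,5],[2,5]),
  ([4,3,2,5,1],[1]),
  ([3,2,5,1,4],[4]),
  ([2,5,1,4,3],[3]),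
  ([5,1,4,3,2],[2]),
  ([4,3,2,1,5],[1,5]),
  ([3,2,1,5,4],[4]),
  ([2,1,5,4,3],[3]),
  ([1,5,4,3,2],[2]),
  ([5,4,3,2,1],[1])]

def c5B : List (List ℕ × List ℕ) := [
  ([1,2,3,4,5],[1,2,3,4,5]),
  ([2,3,4,5,1],[1]),
  ([3,4,5,1,2],[2]),
  ([4,5,1,2,3],[3]),
  ([5,1,2,3,4],[4]),
  ([2,3,4,1,5],[1,5]),
  ([3,4,1,5,2],[2]),
  ([4,1,5,2,3],[3]),
  ([1,5,2,3,4],[4]),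
  ([5,2,3,4,1],[1]),
  ([3,4,1,2,5],[2,5]),
  ([4,1,2,5,3],[3]),
  ([1,2,5,3,4],[4]),
  ([2,5,3,4,1],[1]),
  ([5,3,4,1,2],[2]),
  ([4,1,2,3,5],[3,5]),
  ([1,2,3,5,4],[4]),
  ([2,3,5,4,1],[1]),
  ([3,5,4,1,2],[2]),
  ([5,4,1,2,3],[3]),
  ([2,3,1,4,5],[1,4,5]),
  ([3,1,4,5,2],[2]),
  ([1,4,5,2,3],[3]),
  ([4,5,2,3,1],[1]),
  ([5,2,3,1,4],[4]),
  ([3,1,4,2,5],[2,5]),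
  ([1,4,2,5,3],[3]),
  ([4,2,5,3,1],[1]),
  ([2,5,3,1,4],[4]),
  ([5,3,1,4,2],[2]),
  ([1,4,2,3,5],[3,5]),
  ([4,2,3,5,1],[1]),
  ([2,3,5,1,4],[4]),
  ([3,5,1,4,2],[2]),
  ([5,1,4,2,3],[3]),
  ([4,2,3,1,5],[1,5]),
  ([2,3,1,5,4],[4]),
  ([3,1,5,4,2],[2]),
  ([1,5,4,2,3],[3]),
  ([5,4,2,3,1],[1]),
  ([3,1,2,4,5],[2,4,5]),
  ([1,2,4,5,3],[3]),
  ([2,4,5,3,1],[1]),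
  ([4,5,3,1,2],[2]),
  ([5,3,1,2,4],[4]),
  ([1,2,4,3,5],[3,5]),
  ([2,4,3,5,1],[1]),
  ([4,3,5,1,2],[2]),
  ([3,5,1,2,4],[4]),
  ([5,1,2,4,3],[3]),
  ([2,4,3,1,5],[1,5]),
  ([4,3,1,5,2],[2]),
  ([3,1,5,2,4],[4]),
  ([1,5,2,4,3],[3]),
  ([5,2,4,3,1],[1]),
  ([4,3,1,2,5],[2,5]),
  ([3,1,2,5,4],[4]),
  ([1,2,5,4,3],[3]),
  ([2,5,4,3,1],[1]),
  ([5,4,3,1,2],[2]),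
  ([2,1,3,5,4],[1,3,5,4]),
  ([1,3,5,4,2],[2]),
  ([3,5,4,2,1],[1]),
  ([5,4,2,1,3],[3]),
  ([4,2,1,3,5],[5]),
  ([1,3,5,2,4],[2,4]),
  ([3,5,2,4,1],[1]),
  ([5,2,4,1,3],[3]),
  ([2,4,1,3,5],[5]),
  ([4,1,3,5,2],[2]),
  ([3,5,2,1,4],[1,4]),
  ([5,2,1,4,3],[3]),
  ([2,1,4,3,5],[5]),
  ([1,4,3,5,2],[2]),
  ([4,3,5,2,1],[1]),
  ([5,2,1,3,4],[3,4]),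
  ([2,1,3,4,5],[5]),
  ([1,3,4,5,2],[2]),
  ([3,4,5,2,1],[1]),
  ([4,5,2,1,3],[3]),
  ([1,3,2,5,4],[2,5,4]),
  ([3,2,5,4,1],[1]),
  ([2,5,4,1,3],[3]),
  ([5,4,1,3,2],[2]),
  ([4,1,3,2,5],[5]),
  ([3,2,5,1,4],[1,4]),
  ([2,5,1,4,3],[3]),
  ([5,1,4,3,2],[2]),
  ([1,4,3,2,5],[5]),
  ([4,3,2,5,1],[1]),
  ([2,5,1,3,4],[3,4]),
  ([5,1,3,4,2],[2]),
  ([1,3,4,2,5],[5]),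
  ([3,4,2,5,1],[1]),
  ([4,2,5,1,3],[3]),
  ([5,1,3,2,4],[2,4]),
  ([1,3,2,4,5],[5]),
  ([3,2,4,5,1],[1]),
  ([2,4,5,1,3],[3]),
  ([4,5,1,3,2],[2]),
  ([3,2,1,5,4],[1,5,4]),
  ([2,1,5,4,3],[3]),
  ([1,5,4,3,2],[2]),
  ([5,4,3,2,1],[1]),
  ([4,3,2,1,5],[5]),
  ([2,1,5,3,4],[3,4]),
  ([1,5,3,4,2],[2]),
  ([5,3,4,2,1],[1]),
  ([3,4,2,1,5],[5]),
  ([4,2,1,5,3],[3]),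
  ([1,5,3,2,4],[2,4]),
  ([5,3,2,4,1],[1]),
  ([3,2,4,1,5],[5]),
  ([2,4,1,5,3],[3]),
  ([4,1,5,3,2],[2]),
  ([5,3,2,1,4],[1,4]),
  ([3,2,1,4,5],[5]),
  ([2,1,4,5,3],[3]),
  ([1,4,5,3,2],[2]),
  ([4,5,3,2,1],[1])]
section ChainLemmas

lemma lastFst_cons (m : List ℕ) (p : Item) (A : List Item) :
    lastFst m (p :: A) = lastFst p.1 A := by
  unfold lastFst; rw [List.map_cons, List.getLastD_cons]

lemma lastFst_nil (m : List ℕ) : lastFst m [] = m := rfl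

lemma chainOk_append : ∀ (A : List Item) (B : List Item) (m : List ℕ),
    ChainOk m A → ChainOk (lastFst m A) B → ChainOk m (A ++ B)
  | [], B, m, _, hB => hB
  | p :: A, B, m, hA, hB => by
      rw [lastFst_cons] at hB
      exact ⟨hA.1, chainOk_append A B p.1 hA.2 hB⟩

lemma lastFst_append (m : List ℕ) : ∀ (A B : List Item),
    lastFst m (A ++ B) = lastFst (lastFst m A) B := by
  intro A
  induction A generalizing m with
  | nil => intro B; rfl
  | cons p A ih => intro B; rw [List.cons_append, lastFst_cons, lastFst_cons, ih]

lemma rotsOk (k : ℕ) (q : List ℕ) : ∀ (s j : ℕ), j + s ≤ q.length →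
    ChainOk (q.drop j ++ k :: q.take j) (rots k q j s)
  | 0, j, _ => trivial
  | s+1, j, h => by
      have hj : j < q.length := by omega
      have hd : q.drop j = q.getD j 0 :: q.drop (j+1) := by
        rw [List.getD_eq_getElem q 0 hj]; exact List.drop_eq_getElem_cons hj
      have ht : q.take (j+1) = q.take j ++ [q.getD j 0] := by
        rw [List.getD_eq_getElem q 0 hj, List.take_succ]
        congr 1
        simp [List.getElem?_eq_getElem hj]
      refine ⟨⟨[q.getD j 0], ?_⟩, ?_⟩
      · rw [hd, ht]; simp
      · exact rotsOk k q s (j+1) (by omega)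

lemma rots_one (k : ℕ) (q : List ℕ) (j : ℕ) :
    rots k q j 1 = [(q.drop (j+1) ++ k :: q.take (j+1), [q.getD j 0])] := rfl

lemma rots_lastFst (k : ℕ) (q : List ℕ) : ∀ (s j : ℕ) (m : List ℕ), j + s = q.length → s ≠ 0 →
    lastFst m (rots k q j s) = k :: q
  | 0, _, _, _, hs => absurd rfl hs
  | s+1, j, m, h, _ => by
      cases s with
      | zero =>
          have hj : j + 1 = q.length := by omega
          rw [rots_one, lastFst_cons, lastFst_nil, hj, List.drop_length, List.take_length]
          rfl
      | succ s' =>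
          have hrec := rots_lastFst k q (s'+1) (j+1)
            (q.drop (j+1) ++ k :: q.take (j+1)) (by omega) (by omega)
          rw [show rots k q j (s'+1+1) =
              (q.drop (j+1) ++ k :: q.take (j+1), [q.getD j 0]) :: rots k q (j+1) (s'+1) from rfl,
            lastFst_cons]
          exact hrec

lemma expandOk (k : ℕ) (q inc m : List ℕ) (h : q <:+ m ++ inc) :
    ChainOk m (expand k (q, inc)) := by
  obtain ⟨z, hz⟩ := h
  refine ⟨⟨z, ?_⟩, ?_⟩
  · show z ++ (q ++ [k]) = m ++ (inc ++ [k])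
    rw [← List.append_assoc, hz, List.append_assoc]
  · have := rotsOk k q q.length 0 (by omega)
    simpa using this

lemma lastFst_expand (k : ℕ) (q inc m : List ℕ) (hq : q ≠ []) :
    lastFst m (expand k (q, inc)) = k :: q := by
  unfold expand
  rw [lastFst_cons]
  exact rots_lastFst k q q.length 0 _ (by omega) (fun h => hq (List.length_eq_zero_iff.mp h))

lemma extendOk (k : ℕ) : ∀ (c : List Item) (m : List ℕ),
    (∀ p ∈ c, p.1 ≠ []) → ChainOk m c →
    ChainOk (k :: m) (extend c k) ∧ lastFst (k :: m) (extend c k) = k :: lastFst m c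
  | [], m, _, _ => ⟨trivial, rfl⟩
  | (q, inc) :: t, m, hne, hc => by
      have hqne : q ≠ [] := hne (q, inc) (List.mem_cons_self)
      have hih := extendOk k t q (fun p hp => hne p (List.mem_cons_of_mem _ hp)) hc.2
      have hhead : q <:+ (k :: m) ++ inc := by
        obtain ⟨z, hz⟩ := hc.1
        exact ⟨k :: z, by simp only [List.cons_append]; rw [hz]⟩
      constructor
      · show ChainOk (k :: m) (expand k (q, inc) ++ extend t k)
        refine chainOk_append _ _ _ (expandOk k q inc (k :: m) hhead) ?_
        rw [lastFst_expand k q inc _ hqne]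
        exact hih.1
      · show lastFst (k :: m) (expand k (q, inc) ++ extend t k) = _
        rw [lastFst_append, lastFst_expand k q inc _ hqne, lastFst_cons, hih.2]

end ChainLemmas
section SfromLemmas

lemma Sfrom_append : ∀ (A B : List Item), Sfrom (A ++ B) = Sfrom A ++ Sfrom B
  | [], B => rfl
  | p :: A, B => by
      show p.2 ++ Sfrom (A ++ B) = (p.2 ++ Sfrom A) ++ Sfrom B
      rw [Sfrom_append A B, List.append_assoc]

lemma Sfrom_rots (k : ℕ) (q : List ℕ) : ∀ (s j : ℕ), j + s ≤ q.length →
    Sfrom (rots k q j s) = (q.drop j).take s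
  | 0, j, _ => by simp [rots, Sfrom]
  | s+1, j, h => by
      have hj : j < q.length := by omega
      have hd : q.drop j = q.getD j 0 :: q.drop (j+1) := by
        rw [List.getD_eq_getElem q 0 hj]; exact List.drop_eq_getElem_cons hj
      show [q.getD j 0] ++ Sfrom (rots k q (j+1) s) = _
      rw [Sfrom_rots k q s (j+1) (by omega), hd, List.take_succ_cons]
      rfl

lemma Sfrom_expand (k : ℕ) (q inc : List ℕ) :
    Sfrom (expand k (q, inc)) = (inc ++ [k]) ++ q := by
  show (inc ++ [k]) ++ Sfrom (rots k q 0 q.length) = _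
  rw [Sfrom_rots k q q.length 0 (by omega)]
  simp

lemma Sfrom_extend_cons (k : ℕ) (q inc : List ℕ) (t : List Item) :
    Sfrom (extend ((q, inc) :: t) k) = inc ++ k :: (q ++ Sfrom (extend t k)) := by
  show Sfrom (expand k (q, inc) ++ extend t k) = _
  rw [Sfrom_append, Sfrom_expand]
  simp

lemma rots_length (k : ℕ) (q : List ℕ) : ∀ (s j : ℕ), (rots k q j s).length = s
  | 0, _ => rfl
  | s+1, j => by
      show (rots k q (j+1) s).length + 1 = s + 1
      rw [rots_length k q s (j+1)]

lemma extend_length (k n : ℕ) : ∀ (c : List Item), (∀ p ∈ c, p.1.length = n) →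
    (extend c k).length = c.length * (n + 1)
  | [], _ => by simp [extend]
  | (q, inc) :: t, h => by
      have hq : q.length = n := h (q, inc) (List.mem_cons_self)
      show (expand k (q, inc) ++ extend t k).length = _
      rw [List.length_append, extend_length k n t (fun p hp => h p (List.mem_cons_of_mem _ hp))]
      show (rots k q 0 q.length).length + 1 + _ = _
      rw [rots_length, hq]
      simp only [List.length_cons]
      ring

lemma Sfrom_extend_length (k n : ℕ) : ∀ (c : List Item), (∀ p ∈ c, p.1.length = n) →
    (Sfrom (extend c k)).length = (Sfrom c).length + c.length * (n + 1)
  | [], _ => by simp [extend, Sfrom]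
  | (q, inc) :: t, h => by
      have hq : q.length = n := h (q, inc) (List.mem_cons_self)
      rw [Sfrom_extend_cons]
      show (inc ++ k :: (q ++ Sfrom (extend t k))).length = (inc ++ Sfrom t).length + _
      have := Sfrom_extend_length k n t (fun p hp => h p (List.mem_cons_of_mem _ hp))
      simp only [List.length_append, List.length_cons] at this ⊢
      rw [this, hq]
      ring

lemma rots_qlen (k : ℕ) (q : List ℕ) : ∀ (s j : ℕ), j + s ≤ q.length →
    ∀ p ∈ rots k q j s, p.1.length = q.length + 1
  | 0, j, _ => by simp [rots]
  | s+1, j, h => by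
      intro p hp
      rcases List.mem_cons.mp hp with hp | hp
      · subst hp
        show (q.drop (j+1) ++ k :: q.take (j+1)).length = _
        simp only [List.length_append, List.length_cons, List.length_drop, List.length_take]
        omega
      · exact rots_qlen k q s (j+1) (by omega) p hp

lemma extend_qlen (k n : ℕ) : ∀ (c : List Item), (∀ p ∈ c, p.1.length = n) →
    ∀ p ∈ extend c k, p.1.length = n + 1
  | [], _ => by simp [extend]
  | (q, inc) :: t, h => by
      intro p hp
      have hq : q.length = n := h (q, inc) (List.mem_cons_self)
      rcases List.mem_append.mp hp with hp | hp
      · rcases List.mem_cons.mp hp with hp | hp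
        · subst hp; show (q ++ [k]).length = n + 1; simp [hq]
        · rw [rots_qlen k q q.length 0 (by omega) p hp, hq]
      · exact extend_qlen k n t (fun p hp => h p (List.mem_cons_of_mem _ hp)) p hp

lemma rots_sym (k : ℕ) (q : List ℕ) : ∀ (s j : ℕ), j + s ≤ q.length →
    ∀ p ∈ rots k q j s, (∀ x ∈ p.1, x ∈ q ∨ x = k) ∧ (∀ x ∈ p.2, x ∈ q)
  | 0, j, _ => by simp [rots]
  | s+1, j, h => by
      intro p hp
      have hj : j < q.length := by omega
      rcases List.mem_cons.mp hp with hp | hp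
      · subst hp
        constructor
        · intro x hx
          rcases List.mem_append.mp hx with hx | hx
          · exact Or.inl (List.mem_of_mem_drop hx)
          · rcases List.mem_cons.mp hx with hx | hx
            · exact Or.inr hx
            · exact Or.inl (List.mem_of_mem_take hx)
        · intro x hx
          rcases List.mem_cons.mp hx with hx | hx
          · subst hx
            rw [List.getD_eq_getElem q 0 hj]
            exact List.getElem_mem hj
          · simp at hx
      · exact rots_sym k q s (j+1) (by omega) p hp

end SfromLemmas
section Coverage

lemma chainOk_infix : ∀ (c : List Item) (p m : List ℕ), m <:+ p → ChainOk m c →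
    ∀ x ∈ c, x.1 <:+: (p ++ Sfrom c)
  | [], _, _, _, _ => by simp
  | (q, inc) :: t, p, m, hm, hc => by
      have hq : q <:+ p ++ inc := by
        obtain ⟨z, hz⟩ := hc.1
        obtain ⟨y, hy⟩ := hm
        exact ⟨y ++ z, by rw [List.append_assoc, hz, ← hy, List.append_assoc]⟩
      intro x hx
      rcases List.mem_cons.mp hx with hx | hx
      · subst hx
        show q <:+: p ++ (inc ++ Sfrom t)
        rw [← List.append_assoc]
        exact hq.isInfix.trans (List.prefix_append _ _).isInfix
      · have := chainOk_infix t (p ++ inc) q hq hc.2 x hx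
        rw [List.append_assoc] at this
        exact this

lemma mem_rots (k : ℕ) (q : List ℕ) : ∀ (s j0 j : ℕ), j0 ≤ j → j < j0 + s →
    (q.drop (j+1) ++ k :: q.take (j+1), [q.getD j 0]) ∈ rots k q j0 s
  | 0, j0, j, h1, h2 => absurd h2 (by omega)
  | s+1, j0, j, h1, h2 => by
      rcases eq_or_lt_of_le h1 with rfl | hlt
      · exact List.mem_cons_self
      · exact List.mem_cons_of_mem _ (mem_rots k q s (j0+1) j hlt (by omega))

lemma mem_extend_of_mem (k : ℕ) : ∀ (c : List Item) (pr : Item), pr ∈ c →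
    ∀ x ∈ expand k pr, x ∈ extend c k
  | [], pr, h => by simp at h
  | p :: t, pr, h => by
      intro x hx
      rcases List.mem_cons.mp h with h | h
      · subst h; exact List.mem_append.mpr (Or.inl hx)
      · exact List.mem_append.mpr (Or.inr (mem_extend_of_mem k t pr h x hx))

lemma cover_extend (n : ℕ) (c : List Item)
    (hlen : ∀ p ∈ c, p.1.length = n)
    (hcov : ∀ w : List ℕ, List.Perm w (List.range' 1 n) → w ∈ c.map Prod.fst) :
    ∀ w : List ℕ, List.Perm w (List.range' 1 (n+1)) → w ∈ (extend c (n+1)).map Prod.fst := by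
  intro w hw
  set k := n + 1 with hk
  have hrange : List.range' 1 (n+1) = List.range' 1 n ++ [k] := by
    rw [List.range'_concat]
    simp [hk, Nat.add_comm]
  have hkw : k ∈ w := by
    rw [hw.mem_iff, hrange]
    simp
  obtain ⟨a, b, rfl⟩ := List.append_of_mem hkw
  have hab : List.Perm (a ++ b) (List.range' 1 n) := by
    have h1 : List.Perm (a ++ k :: b) (k :: (a ++ b)) := List.perm_middle
    have h2 : List.Perm (List.range' 1 n ++ [k]) (k :: List.range' 1 n) :=
      List.perm_append_singleton k _
    exact (h1.symm.trans ((hw.trans (hrange ▸ List.Perm.refl _)).trans h2)).cons_inv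
  have hq : List.Perm (b ++ a) (List.range' 1 n) := (List.perm_append_comm).trans hab
  obtain ⟨pr, hpr, hfst⟩ := List.mem_map.mp (hcov (b ++ a) hq)
  cases b with
  | nil =>
      apply List.mem_map.mpr
      refine ⟨(pr.1 ++ [k], pr.2 ++ [k]), ?_, ?_⟩
      · exact mem_extend_of_mem k c pr hpr _ (List.mem_cons_self)
      · simp at hfst
        simp [hfst]
  | cons b0 b' =>
      apply List.mem_map.mpr
      have hblen : (b0 :: b').length - 1 + 1 = (b0 :: b').length := by simp
      set j : ℕ := b'.length with hj
      have hqlen : pr.1.length = n := hlen pr hpr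
      have hjlt : j + 1 ≤ pr.1.length := by
        rw [hfst]
        simp only [List.cons_append, List.length_append, List.length_cons]
        omega
      refine ⟨(pr.1.drop (j+1) ++ k :: pr.1.take (j+1), [pr.1.getD j 0]), ?_, ?_⟩
      · apply mem_extend_of_mem k c pr hpr
        apply List.mem_cons_of_mem
        have : pr.1.length = 0 + pr.1.length := by omega
        exact mem_rots k pr.1 pr.1.length 0 j (by omega) (by omega)
      · show pr.1.drop (j+1) ++ k :: pr.1.take (j+1) = a ++ k :: b0 :: b'
        rw [hfst, show j + 1 = (b0 :: b').length from by simp [hj],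
          List.drop_left, List.take_left]

end Coverage
section Inj

lemma split_k (k : ℕ) : ∀ (a b x y : List ℕ), k ∉ a → k ∉ b →
    a ++ k :: x = b ++ k :: y → a = b ∧ x = y
  | [], [], x, y, _, _, h => by simpa using h
  | [], c :: b, x, y, _, hb, h => by
      simp only [List.nil_append, List.cons_append, List.cons.injEq] at h
      exact absurd (h.1 ▸ (List.mem_cons_self : c ∈ c :: b)) hb
  | a0 :: a, [], x, y, ha, _, h => by
      simp only [List.nil_append, List.cons_append, List.cons.injEq] at h
      exact absurd (h.1 ▸ (List.mem_cons_self : a0 ∈ a0 :: a)) ha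
  | a0 :: a, b0 :: b, x, y, ha, hb, h => by
      simp only [List.cons_append, List.cons.injEq] at h
      obtain ⟨h1, h2⟩ := split_k k a b x y
        (fun hm => ha (List.mem_cons_of_mem _ hm))
        (fun hm => hb (List.mem_cons_of_mem _ hm)) h.2
      exact ⟨by rw [h.1, h1], h2⟩

lemma Sfrom_extend_inj (k n : ℕ) : ∀ (c c' : List Item),
    (∀ p ∈ c, p.1.length = n) → (∀ p ∈ c', p.1.length = n) →
    (∀ p ∈ c, k ∉ p.1 ∧ k ∉ p.2) → (∀ p ∈ c', k ∉ p.1 ∧ k ∉ p.2) →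
    Sfrom (extend c k) = Sfrom (extend c' k) → Sfrom c = Sfrom c'
  | [], [], _, _, _, _, _ => rfl
  | [], (q', inc') :: t', _, _, _, _, h => by
      rw [Sfrom_extend_cons] at h
      have h2 := congrArg List.length h
      simp only [show extend ([] : List Item) k = [] from rfl, Sfrom, List.length_nil,
        List.length_append, List.length_cons] at h2
      omega
  | (q, inc) :: t, [], _, _, _, _, h => by
      rw [Sfrom_extend_cons] at h
      have h2 := congrArg List.length h
      simp only [show extend ([] : List Item) k = [] from rfl, Sfrom, List.length_nil,
        List.length_append, List.length_cons] at h2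
      omega
  | (q, inc) :: t, (q', inc') :: t', hl, hl', hs, hs', h => by
      rw [Sfrom_extend_cons, Sfrom_extend_cons] at h
      have hki : k ∉ inc := (hs _ (List.mem_cons_self)).2
      have hki' : k ∉ inc' := (hs' _ (List.mem_cons_self)).2
      obtain ⟨h1, h2⟩ := split_k k inc inc' _ _ hki hki' h
      have hlen : q.length = q'.length := by
        rw [hl _ (List.mem_cons_self), hl' _ (List.mem_cons_self)]
      obtain ⟨h3, h4⟩ := List.append_inj h2 hlen
      have := Sfrom_extend_inj k n t t'
        (fun p hp => hl p (List.mem_cons_of_mem _ hp))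
        (fun p hp => hl' p (List.mem_cons_of_mem _ hp))
        (fun p hp => hs p (List.mem_cons_of_mem _ hp))
        (fun p hp => hs' p (List.mem_cons_of_mem _ hp)) h4
      show inc ++ Sfrom t = inc' ++ Sfrom t'
      rw [h1, this]

end Inj

lemma exists_of_mem_extend (k : ℕ) : ∀ (c : List Item) (p : Item), p ∈ extend c k →
    ∃ pr ∈ c, p ∈ expand k pr
  | [], p, h => by simp [extend] at h
  | p0 :: t, p, h => by
      rcases List.mem_append.mp h with h | h
      · exact ⟨p0, List.mem_cons_self, h⟩
      · obtain ⟨pr, h1, h2⟩ := exists_of_mem_extend k t p h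
        exact ⟨pr, List.mem_cons_of_mem _ h1, h2⟩

structure Good (n : ℕ) (c : List Item) : Prop where
  head : ∃ r, c = (List.range' 1 n, List.range' 1 n) :: r
  chain : ChainOk [] c
  qlen : ∀ p ∈ c, p.1.length = n
  count : c.length = Nat.factorial n
  slen : (Sfrom c).length = ∑ k ∈ Finset.Icc 1 n, Nat.factorial k
  qsym : ∀ p ∈ c, ∀ x ∈ p.1, 1 ≤ x ∧ x ≤ n
  isym : ∀ p ∈ c, ∀ x ∈ p.2, 1 ≤ x ∧ x ≤ n
  cover : ∀ w : List ℕ, List.Perm w (List.range' 1 n) → w ∈ c.map Prod.fst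

lemma good_extend (n : ℕ) (hn : 1 ≤ n) (c : List Item) (hg : Good n c) :
    Good (n+1) (extend c (n+1)) := by
  obtain ⟨r, hr⟩ := hg.head
  set k := n + 1 with hk
  have hrange : List.range' 1 (n+1) = List.range' 1 n ++ [k] := by
    rw [List.range'_concat]
    simp [hk, Nat.add_comm]
  have hne : ∀ p ∈ c, p.1 ≠ [] := by
    intro p hp hnil
    have := hg.qlen p hp
    rw [hnil] at this
    simp at this
    omega
  refine ⟨?_, ?_, extend_qlen k n c hg.qlen, ?_, ?_, ?_, ?_, cover_extend n c hg.qlen hg.cover⟩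
  · -- head
    refine ⟨rots k (List.range' 1 n) 0 (List.range' 1 n).length ++ extend r k, ?_⟩
    rw [hr]
    show expand k _ ++ extend r k = _
    unfold expand
    simp only [List.cons_append]
    rw [← hrange]
  · -- chain
    rw [hr]
    show ChainOk [] (expand k (List.range' 1 n, List.range' 1 n) ++ extend r k)
    have hch := hg.chain
    rw [hr] at hch
    refine chainOk_append _ _ _ ?_ ?_
    · exact expandOk k _ _ [] (by simp)
    · rw [lastFst_expand k _ _ _ (by simp [List.range'_eq_nil_iff]; omega)]
      exact (extendOk k r (List.range' 1 n)
        (fun p hp => hne p (hr ▸ List.mem_cons_of_mem _ hp)) hch.2).1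
  · -- count
    rw [extend_length k n c hg.qlen, hg.count, hk]
    rw [Nat.factorial_succ]
    ring
  · -- slen
    rw [Sfrom_extend_length k n c hg.qlen, hg.slen, hg.count, hk,
      Finset.sum_Icc_succ_top (by omega : 1 ≤ n + 1)]
    rw [Nat.factorial_succ]
    ring
  · -- qsym
    intro p hp x hx
    obtain ⟨pr, hpr, hm⟩ := exists_of_mem_extend k c p hp
    have hq := hg.qsym pr hpr
    rcases List.mem_cons.mp hm with hm | hm
    · subst hm
      rcases List.mem_append.mp hx with hx | hx
      · have := hq x hx; omega
      · simp at hx; omega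
    · rcases (rots_sym k pr.1 pr.1.length 0 (by omega) p hm).1 x hx with hx | hx
      · have := hq x hx; omega
      · omega
  · -- isym
    intro p hp x hx
    obtain ⟨pr, hpr, hm⟩ := exists_of_mem_extend k c p hp
    have hq := hg.qsym pr hpr
    have hi := hg.isym pr hpr
    rcases List.mem_cons.mp hm with hm | hm
    · subst hm
      rcases List.mem_append.mp hx with hx | hx
      · have := hi x hx; omega
      · simp at hx; omega
    · have := hq x ((rots_sym k pr.1 pr.1.length 0 (by omega) p hm).2 x hx)
      omega
def build (c : List Item) : ℕ → List Item
  | 0 => c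
  | d+1 => extend (build c d) (5 + d + 1)

lemma good_build (c : List Item) (h : Good 5 c) : ∀ d, Good (5 + d) (build c d)
  | 0 => h
  | d+1 => good_extend (5 + d) (by omega) (build c d) (good_build c h d)

lemma build_ne (cA cB : List Item) (hA : Good 5 cA) (hB : Good 5 cB)
    (hne : Sfrom cA ≠ Sfrom cB) : ∀ d, Sfrom (build cA d) ≠ Sfrom (build cB d)
  | 0 => hne
  | d+1 => by
      intro h
      apply build_ne cA cB hA hB hne d
      have gA := good_build cA hA d
      have gB := good_build cB hB d
      refine Sfrom_extend_inj (5 + d + 1) (5 + d) _ _ gA.qlen gB.qlen ?_ ?_ h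
      · intro p hp
        constructor
        · intro hk; have := gA.qsym p hp _ hk; omega
        · intro hk; have := gA.isym p hp _ hk; omega
      · intro p hp
        constructor
        · intro hk; have := gB.qsym p hp _ hk; omega
        · intro hk; have := gB.isym p hp _ hk; omega

lemma exists_of_mem_Sfrom : ∀ (c : List Item) (x : ℕ), x ∈ Sfrom c → ∃ p ∈ c, x ∈ p.2
  | [], x, h => by simp [Sfrom] at h
  | p :: t, x, h => by
      rcases List.mem_append.mp h with h | h
      · exact ⟨p, List.mem_cons_self, h⟩
      · obtain ⟨p', h1, h2⟩ := exists_of_mem_Sfrom t x h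
        exact ⟨p', List.mem_cons_of_mem _ h1, h2⟩
lemma good_c5A : Good 5 c5A := by
  refine ⟨⟨c5A.tail, rfl⟩, by decide, by decide, by decide, ?_, by decide, by decide, ?_⟩
  · rw [show (∑ k ∈ Finset.Icc 1 5, Nat.factorial k) = 153 from by decide]
    decide
  · have hd : ∀ w ∈ allPerms (List.range' 1 5), w ∈ c5A.map Prod.fst := by decide
    exact fun w hw => hd w (mem_allPerms _ w hw)

lemma good_c5B : Good 5 c5B := by
  refine ⟨⟨c5B.tail, rfl⟩, by decide, by decide, by decide, ?_, by decide, by decide, ?_⟩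
  · rw [show (∑ k ∈ Finset.Icc 1 5, Nat.factorial k) = 153 from by decide]
    decide
  · have hd : ∀ w ∈ allPerms (List.range' 1 5), w ∈ c5B.map Prod.fst := by decide
    exact fun w hw => hd w (mem_allPerms _ w hw)

theorem stmt15 (n : ℕ) (hn : 5 ≤ n) :
    ∃ s t : List ℕ, s ≠ t ∧
      s.length = ∑ k ∈ Finset.Icc 1 n, Nat.factorial k ∧
      t.length = ∑ k ∈ Finset.Icc 1 n, Nat.factorial k ∧
      List.range' 1 n <+: s ∧ List.range' 1 n <+: t ∧
      (∀ x ∈ s, x ∈ Finset.Icc 1 n) ∧ (∀ x ∈ t, x ∈ Finset.Icc 1 n) ∧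
      (∀ w : List ℕ, w.Perm (List.range' 1 n) → w <:+: s) ∧
      (∀ w : List ℕ, w.Perm (List.range' 1 n) → w <:+: t) := by
  obtain ⟨d, rfl⟩ := Nat.exists_eq_add_of_le hn
  have gA := good_build c5A good_c5A d
  have gB := good_build c5B good_c5B d
  refine ⟨Sfrom (build c5A d), Sfrom (build c5B d),
    build_ne _ _ good_c5A good_c5B (by decide) d, gA.slen, gB.slen, ?_, ?_, ?_, ?_, ?_, ?_⟩
  · obtain ⟨r, hr⟩ := gA.head
    rw [hr]
    exact ⟨Sfrom r, rfl⟩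
  · obtain ⟨r, hr⟩ := gB.head
    rw [hr]
    exact ⟨Sfrom r, rfl⟩
  · intro x hx
    obtain ⟨p, hp, hxp⟩ := exists_of_mem_Sfrom _ x hx
    have := gA.isym p hp x hxp
    exact Finset.mem_Icc.mpr this
  · intro x hx
    obtain ⟨p, hp, hxp⟩ := exists_of_mem_Sfrom _ x hx
    have := gB.isym p hp x hxp
    exact Finset.mem_Icc.mpr this
  · intro w hw
    obtain ⟨p, hp, hfst⟩ := List.mem_map.mp (gA.cover w hw)
    have := chainOk_infix _ [] [] List.suffix_rfl gA.chain p hp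
    rw [List.nil_append] at this
    rw [← hfst]
    exact this
  · intro w hw
    obtain ⟨p, hp, hfst⟩ := List.mem_map.mp (gB.cover w hw)
    have := chainOk_infix _ [] [] List.suffix_rfl gB.chain p hp
    rw [List.nil_append] at this
    rw [← hfst]
    exact this
end

section
/- For 2 ≤ k < n and 0 ≤ j < k!, the permutations of {1,...,n} occupying positions j·n!/k! + 1 through (j+1)·n!/k! in the appearance order within M_n are exactly those whose circular shift representation [j_2 ⋯ j_n]_c has first k-1 digits j_2, ..., j_k equal to the digits of j in the factorial-type expansion j = ∑_{i=2}^k j_i · k!/i!. -/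
def pcyc (k : ℕ) : Equiv.Perm ℕ := (List.range' 1 k).formPerm

/-- The ordered composition `p_2^{e 2} ∘ p_3^{e 3} ∘ ⋯ ∘ p_n^{e n}`. -/
def circProd (n : ℕ) (e : ℕ → ℕ) : Equiv.Perm ℕ :=
  ((List.range' 2 (n - 1)).map fun i => (pcyc i) ^ (e i)).prod

/-- All length-`n` windows of `s`. -/
def windows (n : ℕ) (s : List ℕ) : List (List ℕ) :=
  (List.range (s.length + 1 - n)).map fun i => (s.drop i).take n

/-- The permutations of `{1,…,n}` in order of first appearance as substrings of `s`. -/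
def permsOrder (n : ℕ) (s : List ℕ) : List (List ℕ) :=
  (((windows n s).filter fun w => decide (w.Perm (List.range' 1 n))).reverse.dedup).reverse

/-- Length of the maximal overlap: the longest suffix of `s` that is a prefix of `t`. -/
def ov (s t : List ℕ) : ℕ :=
  ((List.range (min s.length t.length + 1)).filter fun l => (t.take l).isSuffixOf s).foldr max 0

/-- Concatenate with maximal overlap. -/
def mergeOv (s t : List ℕ) : List ℕ := s ++ t.drop (ov s t)

/-- The recursively constructed superpermutation `M_n`. -/
def Mrec : ℕ → List ℕ
  | 0 => []
  | 1 => [1]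
  | n + 2 =>
      ((permsOrder (n + 1) (Mrec (n + 1))).map fun P => P ++ [n + 2] ++ P).foldl mergeOv []

lemma fdiv_mul {i k n : ℕ} (h1 : i ≤ k) (h2 : k ≤ n) :
    n.factorial / i.factorial = (n.factorial / k.factorial) * (k.factorial / i.factorial) := by
  obtain ⟨a, ha⟩ := Nat.factorial_dvd_factorial h1
  obtain ⟨b, hb⟩ := Nat.factorial_dvd_factorial h2
  have hi := Nat.factorial_pos i
  have hk := Nat.factorial_pos k
  have ha' : k.factorial / i.factorial = a := by rw [ha, Nat.mul_div_cancel_left _ hi]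
  have hb' : n.factorial / k.factorial = b := by rw [hb, Nat.mul_div_cancel_left _ hk]
  have hn : n.factorial / i.factorial = a * b := by
    rw [hb, ha, mul_assoc, Nat.mul_div_cancel_left _ hi]
  rw [hn, ha', hb', mul_comm]

lemma fdiv_succ {i n : ℕ} (h : i ≤ n) :
    (n+1).factorial / i.factorial = (n.factorial / i.factorial) * (n + 1) := by
  obtain ⟨a, ha⟩ := Nat.factorial_dvd_factorial h
  have hi := Nat.factorial_pos i
  have h1 : (n+1).factorial = i.factorial * (a * (n+1)) := by
    rw [Nat.factorial_succ, ha]; ring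
  rw [h1, ha, Nat.mul_div_cancel_left _ hi, Nat.mul_div_cancel_left _ hi]

lemma fact_digits : ∀ (k : ℕ) (d : ℕ → ℕ), (∀ i ∈ Finset.Icc 2 k, d i < i) →
    ∀ i ∈ Finset.Icc 2 k,
      (∑ i' ∈ Finset.Icc 2 k, d i' * (k.factorial / i'.factorial)) /
        (k.factorial / i.factorial) % i = d i := by
  intro k
  induction k with
  | zero => intro d _ i hi; simp at hi
  | succ k ih =>
    intro d hd i hi
    rcases Nat.lt_or_ge k 1 with hk | hk
    · interval_cases k
      simp at hi
    have hdk : d (k+1) < k + 1 := hd (k+1) (Finset.mem_Icc.mpr ⟨by omega, le_refl _⟩)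
    have hsum : (∑ i' ∈ Finset.Icc 2 (k+1), d i' * ((k+1).factorial / i'.factorial))
        = (k+1) * (∑ i' ∈ Finset.Icc 2 k, d i' * (k.factorial / i'.factorial)) + d (k+1) := by
      rw [Finset.sum_Icc_succ_top (by omega), Nat.div_self (Nat.factorial_pos _), mul_one,
        Finset.mul_sum]
      congr 1
      apply Finset.sum_congr rfl
      intro i' hi'
      simp only [Finset.mem_Icc] at hi'
      rw [fdiv_succ hi'.2]; ring
    rw [hsum]
    simp only [Finset.mem_Icc] at hi
    rcases Nat.lt_or_ge i (k+1) with hik | hik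
    · have hile : i ≤ k := by omega
      rw [fdiv_succ hile, mul_comm (k.factorial / i.factorial) (k+1), ← Nat.div_div_eq_div_mul,
        Nat.mul_add_div (by omega), Nat.div_eq_of_lt hdk, add_zero]
      exact ih d (fun i hi => hd i (by simp only [Finset.mem_Icc] at hi ⊢; omega)) i
        (by simp only [Finset.mem_Icc]; omega)
    · have : i = k + 1 := by omega
      subst this
      rw [Nat.div_self (Nat.factorial_pos _), Nat.div_one, Nat.mul_add_mod,
        Nat.mod_eq_of_lt hdk]

lemma gen_sum_lt (k : ℕ) (e : ℕ → ℕ) : ∀ (n : ℕ), k ≤ n → (∀ i ∈ Finset.Ioc k n, e i < i) →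
    (∑ i ∈ Finset.Ioc k n, e i * (n.factorial / i.factorial)) < n.factorial / k.factorial := by
  intro n
  induction n with
  | zero => intro h _; simp [Nat.le_zero.mp h]
  | succ n ih =>
    intro hkn he
    rcases Nat.lt_or_ge n k with h | h
    · have : k = n + 1 := by omega
      subst this; simp [Nat.div_self (Nat.factorial_pos _)]
    have hstep : (∑ i ∈ Finset.Ioc k (n+1), e i * ((n+1).factorial / i.factorial))
        = (∑ i ∈ Finset.Ioc k n, e i * (n.factorial / i.factorial)) * (n+1) + e (n+1) := by
      have h1 : Finset.Ioc k (n+1) = insert (n+1) (Finset.Ioc k n) := by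
        ext x; simp only [Finset.mem_Ioc, Finset.mem_insert]; omega
      rw [h1, Finset.sum_insert (by simp), Nat.div_self (Nat.factorial_pos _), mul_one,
          Finset.sum_mul, add_comm]
      congr 1
      apply Finset.sum_congr rfl
      intro i' hi'
      simp only [Finset.mem_Ioc] at hi'
      rw [fdiv_succ hi'.2, ← mul_assoc]
    rw [hstep, fdiv_succ h]
    have hS := ih h (fun i hi => he i (by simp only [Finset.mem_Ioc] at hi ⊢; omega))
    have he1 : e (n+1) < n + 1 := he (n+1) (by simp only [Finset.mem_Ioc]; omega)
    calc (∑ i ∈ Finset.Ioc k n, e i * (n.factorial / i.factorial)) * (n+1) + e (n+1)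
        < ((∑ i ∈ Finset.Ioc k n, e i * (n.factorial / i.factorial)) + 1) * (n+1) := by
          have : ((∑ i ∈ Finset.Ioc k n, e i * (n.factorial / i.factorial)) + 1) * (n+1)
            = (∑ i ∈ Finset.Ioc k n, e i * (n.factorial / i.factorial)) * (n+1) + (n+1) := by ring
          omega
      _ ≤ (n.factorial / k.factorial) * (n+1) := Nat.mul_le_mul_right _ (by omega)

def word (n : ℕ) (e : ℕ → ℕ) : List ℕ := (List.range' 1 n).map fun x => circProd n e x

lemma mem_range'_iff {s n x : ℕ} : x ∈ List.range' s n ↔ s ≤ x ∧ x < s + n := by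
  rw [List.mem_range']
  constructor
  · rintro ⟨i, hi, rfl⟩; omega
  · rintro ⟨h1, h2⟩; exact ⟨x - s, by omega, by omega⟩

lemma pcyc_fix {k x : ℕ} (h : x ∉ List.range' 1 k) : pcyc k x = x :=
  List.formPerm_apply_of_notMem h

lemma pcyc_pow_fix {k x j : ℕ} (h : x ∉ List.range' 1 k) : (pcyc k ^ j) x = x := by
  induction j with
  | zero => simp
  | succ j ih => rw [pow_succ', Equiv.Perm.mul_apply, ih, pcyc_fix h]

lemma pcyc_pow_mem {k x j : ℕ} (h : x ∈ List.range' 1 k) : (pcyc k ^ j) x ∈ List.range' 1 k := by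
  induction j with
  | zero => simpa using h
  | succ j ih => rw [pow_succ', Equiv.Perm.mul_apply]; exact List.formPerm_apply_mem_of_mem ih

lemma circProd_fix {n x : ℕ} (e : ℕ → ℕ) (h : n < x) : circProd n e x = x := by
  unfold circProd
  have : ∀ L : List ℕ, (∀ k ∈ L, k ≤ n) →
      ((L.map fun i => (pcyc i) ^ (e i)).prod) x = x := by
    intro L
    induction L with
    | nil => intro _; simp
    | cons a L ih =>
      intro hL
      simp only [List.map_cons, List.prod_cons, Equiv.Perm.mul_apply]
      rw [ih (fun k hk => hL k (List.mem_cons_of_mem _ hk))]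
      have ha : a ≤ n := hL a (List.mem_cons_self)
      have hnm : x ∉ List.range' 1 a := by
        rw [mem_range'_iff]; omega
      exact pcyc_pow_fix hnm
  exact this _ (fun k hk => by rw [mem_range'_iff] at hk; omega)

lemma circProd_mem {n x : ℕ} (e : ℕ → ℕ) (h : x ∈ List.range' 1 n) :
    circProd n e x ∈ List.range' 1 n := by
  unfold circProd
  have : ∀ L : List ℕ, (∀ k ∈ L, k ≤ n) →
      ((L.map fun i => (pcyc i) ^ (e i)).prod) x ∈ List.range' 1 n := by
    intro L
    induction L with
    | nil => intro _; simpa using h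
    | cons a L ih =>
      intro hL
      simp only [List.map_cons, List.prod_cons, Equiv.Perm.mul_apply]
      have hy := ih (fun k hk => hL k (List.mem_cons_of_mem _ hk))
      have ha : a ≤ n := hL a (List.mem_cons_self)
      set y := ((L.map fun i => (pcyc i) ^ (e i)).prod) x with hy'
      by_cases hmem : y ∈ List.range' 1 a
      · have := pcyc_pow_mem (j := e a) hmem
        rw [mem_range'_iff] at this ⊢; omega
      · rw [pcyc_pow_fix hmem]; exact hy
  exact this _ (fun k hk => by rw [mem_range'_iff] at hk; omega)

lemma word_length (n : ℕ) (e : ℕ → ℕ) : (word n e).length = n := by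
  simp [word]

lemma word_perm (n : ℕ) (e : ℕ → ℕ) : (word n e).Perm (List.range' 1 n) := by
  have hnd : (word n e).Nodup :=
    (List.nodup_range' (s := 1) (n := n)).map ((circProd n e).injective)
  have hsub : word n e ⊆ List.range' 1 n := by
    intro x hx
    simp only [word, List.mem_map] at hx
    obtain ⟨y, hy, rfl⟩ := hx
    exact circProd_mem e hy
  exact (List.subperm_of_subset hnd hsub).perm_of_length_le (by simp [word_length])

lemma word_congr {n : ℕ} {e e' : ℕ → ℕ} (h : ∀ i, 2 ≤ i → i ≤ n → e i = e' i) :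
    word n e = word n e' := by
  have : circProd n e = circProd n e' := by
    unfold circProd
    congr 1
    apply List.map_congr_left
    intro i hi
    rw [mem_range'_iff] at hi
    rw [h i hi.1 (by omega)]
  simp [word, this]

-- map of pcyc power over range' is rotation
lemma map_pcyc_pow (N i : ℕ) :
    (List.range' 1 N).map (fun x => (pcyc N ^ i) x) = (List.range' 1 N).rotate i := by
  induction i with
  | zero => simp
  | succ i ih =>
    have hbase : (List.range' 1 N).map (fun x => pcyc N x) = (List.range' 1 N).rotate 1 := by
      apply List.ext_getElem (by simp)
      intro k h1 h2
      simp only [List.getElem_map]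
      rw [List.getElem_rotate]
      have hlen : (List.range' 1 N).length = N := by simp
      have hk : k < N := by simpa [hlen] using h1
      have := List.formPerm_apply_getElem (List.range' 1 N) (List.nodup_range' (s := 1) (n := N)) k
        (by simpa [hlen])
      simpa [pcyc, hlen] using this
    have : (fun x => (pcyc N ^ (i+1)) x) = (fun x => pcyc N x) ∘ (fun x => (pcyc N ^ i) x) := by
      funext x; rw [pow_succ', Equiv.Perm.mul_apply]; rfl
    rw [this, ← List.map_map, ih, List.map_rotate, hbase, List.rotate_rotate, add_comm]

lemma word_succ {n : ℕ} (hn : 1 ≤ n) (e : ℕ → ℕ) (hi : e (n+1) ≤ n) :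
    word (n+1) e = (word n e).drop (e (n+1)) ++ (n+1) :: (word n e).take (e (n+1)) := by
  have hsplit : circProd (n+1) e = circProd n e * (pcyc (n+1)) ^ (e (n+1)) := by
    unfold circProd
    have h1 : (n+1) - 1 = (n-1) + 1 := by omega
    rw [h1, List.range'_concat]
    have h2 : 2 + 1 * (n-1) = n + 1 := by omega
    rw [h2, List.map_append, List.prod_append]
    simp
  have happ : ∀ x, circProd (n+1) e x = circProd n e ((pcyc (n+1) ^ e (n+1)) x) := by
    intro x; rw [hsplit]; simp [Equiv.Perm.mul_apply]
  have : word (n+1) e = ((List.range' 1 (n+1)).map fun x => (pcyc (n+1) ^ e (n+1)) x).map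
      fun x => circProd n e x := by
    rw [List.map_map]; unfold word; apply List.map_congr_left; intro x _; exact happ x
  rw [this, map_pcyc_pow, List.map_rotate]
  have hconcat : List.range' 1 (n+1) = List.range' 1 n ++ [n+1] := by
    rw [List.range'_concat]; simp [Nat.add_comm]
  rw [hconcat, List.map_append]
  have hfix : ([n+1].map fun x => circProd n e x) = [n+1] := by
    simp [circProd_fix e (by omega : n < n + 1)]
  rw [hfix]
  have hlen : ((List.range' 1 n).map fun x => circProd n e x).length = n := by simp
  rw [List.rotate_eq_drop_append_take (by simp [hlen]; omega)]
  rw [List.drop_append_of_le_length (by rw [hlen]; exact hi),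
     List.take_append_of_le_length (by rw [hlen]; exact hi)]
  simp [word]

lemma foldr_max_mem (l : List ℕ) : l.foldr max 0 = 0 ∨ l.foldr max 0 ∈ l := by
  induction l with
  | nil => left; rfl
  | cons a l ih =>
    simp only [List.foldr_cons]
    rcases max_choice a (l.foldr max 0) with h | h
    · right; rw [h]; exact List.mem_cons_self
    · rw [h]; rcases ih with h' | h'
      · left; exact h'
      · right; exact List.mem_cons_of_mem _ h'

lemma foldr_max_le {l : List ℕ} {b : ℕ} (h : ∀ x ∈ l, x ≤ b) : l.foldr max 0 ≤ b := by
  induction l with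
  | nil => exact Nat.zero_le b
  | cons a l ih =>
    simp only [List.foldr_cons, max_le_iff]
    exact ⟨h a (List.mem_cons_self), ih fun x hx => h x (List.mem_cons_of_mem _ hx)⟩

lemma ov_take_suffix (s t : List ℕ) : (t.take (ov s t)) <:+ s := by
  rcases foldr_max_mem ((List.range (min s.length t.length + 1)).filter
      fun l => (t.take l).isSuffixOf s) with h | h
  · rw [ov, h]; simp
  · rw [List.mem_filter] at h
    have := h.2
    rwa [List.isSuffixOf_iff_suffix] at this
    
lemma ov_le_of_forall {s t : List ℕ} {b : ℕ}
    (h : ∀ l, l ≤ min s.length t.length → (t.take l) <:+ s → l ≤ b) : ov s t ≤ b := by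
  apply foldr_max_le
  intro x hx
  rw [List.mem_filter, List.mem_range] at hx
  exact h x (by omega) (by rw [← List.isSuffixOf_iff_suffix]; exact hx.2)

lemma suffix_of_suffix_length_le {l1 l2 s : List ℕ} (h1 : l1 <:+ s) (h2 : l2 <:+ s)
    (h : l1.length ≤ l2.length) : l1 <:+ l2 := by
  have hl1 := h1.length_le
  have hl2 := h2.length_le
  have e1 : l1 = s.drop (s.length - l1.length) := List.suffix_iff_eq_drop.mp h1
  have e2 : l2 = s.drop (s.length - l2.length) := List.suffix_iff_eq_drop.mp h2
  rw [List.suffix_iff_eq_drop]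
  have e2d : l2.drop (l2.length - l1.length) =
      s.drop ((s.length - l2.length) + (l2.length - l1.length)) := by
    conv_lhs => rw [e2]
    rw [List.drop_drop]
    congr 2
    rw [List.length_drop]
    omega
  have harith : (s.length - l2.length) + (l2.length - l1.length) = s.length - l1.length := by
    omega
  rw [e2d, harith, ← e1]

lemma windows_append {N : ℕ} (hN : 1 ≤ N) (s u : List ℕ) (hs : N - 1 ≤ s.length) :
    windows N (s ++ u) = windows N s ++ windows N (s.drop (s.length - (N-1)) ++ u) := by
  unfold windows
  have hlen1 : (s ++ u).length + 1 - N = (s.length + 1 - N) + u.length := by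
    simp [List.length_append]; omega
  have hlen2 : (s.drop (s.length - (N-1)) ++ u).length + 1 - N = u.length := by
    simp [List.length_append, List.length_drop]; omega
  rw [hlen1, hlen2, List.range_add, List.map_append, List.map_map]
  congr 1
  · apply List.map_congr_left
    intro i hi
    rw [List.mem_range] at hi
    rw [List.drop_append_of_le_length (by omega),
      List.take_append_of_le_length (by rw [List.length_drop]; omega)]
  · apply List.map_congr_left
    intro p _
    simp only [Function.comp]
    have h1 : s.length + 1 - N + p = (s.length - (N-1)) + p := by omega
    rw [h1, ← List.drop_drop, List.drop_append_of_le_length (by omega)]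

lemma windows_block {n : ℕ} (x w : List ℕ) (hw : w.length = n) :
    windows (n+1) (x ++ (w ++ (n+1) :: w)) =
      ((List.range x.length).map fun p => (((x ++ w).drop p).take (n+1))) ++
      ((List.range (n+1)).map fun i => w.drop i ++ (n+1) :: w.take i) := by
  unfold windows
  have hlen : (x ++ (w ++ (n+1) :: w)).length + 1 - (n+1) = x.length + (n+1) := by
    simp [List.length_append, hw]; omega
  rw [hlen, List.range_add, List.map_append, List.map_map]
  congr 1
  · apply List.map_congr_left
    intro p hp
    rw [List.mem_range] at hp
    rw [List.drop_append_of_le_length (by omega), List.drop_append_of_le_length (by omega),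
      ← List.append_assoc,
      List.take_append_of_le_length (by simp [List.length_append, List.length_drop, hw]; omega)]
  · apply List.map_congr_left
    intro i hi
    rw [List.mem_range] at hi
    simp only [Function.comp]
    rw [← List.drop_drop, List.drop_left,
      List.drop_append_of_le_length (by omega : i ≤ w.length),
      List.take_append,
      List.take_of_length_le (by rw [List.length_drop]; omega)]
    have h2 : n + 1 - (w.drop i).length = i + 1 := by rw [List.length_drop]; omega
    rw [h2, List.take_succ_cons]

def fdig (n m : ℕ) : ℕ → ℕ := fun i => m / (n.factorial / i.factorial) % i

def canon (n : ℕ) : List (List ℕ) := (List.range n.factorial).map fun m => word n (fdig n m)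

def rotWins (n : ℕ) (w : List ℕ) : List (List ℕ) :=
  (List.range (n+1)).map fun i => w.drop i ++ (n+1) :: w.take i

def filterPerms (n : ℕ) (L : List (List ℕ)) : List (List ℕ) :=
  L.filter fun w => decide (w.Perm (List.range' 1 n))

lemma center_eq {v : ℕ} : ∀ {A₁ B₁ A₂ B₂ : List ℕ}, (∀ y ∈ A₁, y < v) → (∀ y ∈ B₁, y < v) →
    A₁ ++ v :: A₂ = B₁ ++ v :: B₂ → A₁ = B₁ ∧ A₂ = B₂ := by
  intro A₁
  induction A₁ with
  | nil =>
    intro B₁ A₂ B₂ _ hB hE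
    cases B₁ with
    | nil => simpa using hE
    | cons b B₁ =>
      simp only [List.nil_append, List.cons_append, List.cons.injEq] at hE
      have := hB b (List.mem_cons_self)
      omega
  | cons a A₁ ih =>
    intro B₁ A₂ B₂ hA hB hE
    cases B₁ with
    | nil =>
      simp only [List.cons_append, List.nil_append, List.cons.injEq] at hE
      have := hA a (List.mem_cons_self)
      omega
    | cons b B₁ =>
      simp only [List.cons_append, List.cons.injEq] at hE
      obtain ⟨rfl, hE⟩ := hE
      have := ih (fun y hy => hA y (List.mem_cons_of_mem _ hy))
        (fun y hy => hB y (List.mem_cons_of_mem _ hy)) hE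
      exact ⟨by rw [this.1], this.2⟩

lemma one_step {n : ℕ} (hn : 1 ≤ n) (acc w₀ w : List ℕ)
    (hw₀ : w₀.Perm (List.range' 1 n)) (hw : w.Perm (List.range' 1 n)) (hne : w₀ ≠ w)
    (hsuf : (w₀ ++ (n+1) :: w₀) <:+ acc) :
    filterPerms (n+1) (windows (n+1) (mergeOv acc (w ++ (n+1) :: w))) =
      filterPerms (n+1) (windows (n+1) acc) ++ rotWins n w ∧
    (w ++ (n+1) :: w) <:+ mergeOv acc (w ++ (n+1) :: w) := by
  set B := w ++ (n+1) :: w with hB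
  have lw₀ : w₀.length = n := by rw [hw₀.length_eq]; simp
  have lw : w.length = n := by rw [hw.length_eq]; simp
  have hel₀ : ∀ y ∈ w₀, y < n + 1 := by
    intro y hy
    have := hw₀.subset hy
    rw [mem_range'_iff] at this; omega
  have hel : ∀ y ∈ w, y < n + 1 := by
    intro y hy
    have := hw.subset hy
    rw [mem_range'_iff] at this; omega
  have lB : B.length = 2*n+1 := by simp [hB, lw]; omega
  have hlenW : (w₀ ++ (n+1) :: w₀).length = 2*n+1 := by simp [lw₀]; omega
  have hsuflen : 2*n+1 ≤ acc.length := by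
    have := hsuf.length_le; omega
  -- the overlap is at most n
  have hovle : ov acc B ≤ n := by
    apply ov_le_of_forall
    intro c hcmin hsufc
    by_contra hgt
    push_neg at hgt
    have hcB : c ≤ 2*n+1 := by
      have := min_le_right acc.length B.length; omega
    have hlt : (B.take c).length = c := by rw [List.length_take]; omega
    have hsub : B.take c <:+ (w₀ ++ (n+1) :: w₀) :=
      suffix_of_suffix_length_le hsufc hsuf (by omega)
    -- compute take c B
    have htc : B.take c = w ++ (n+1) :: w.take (c - (n+1)) := by
      rw [hB, List.take_append, List.take_of_length_le (by omega)]
      congr 1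
      have h1 : c - w.length = (c - (n+1)) + 1 := by omega
      rw [h1, List.take_succ_cons]
    -- compute the corresponding suffix of w₀-block
    have e1 : B.take c = (w₀ ++ (n+1) :: w₀).drop (2*n+1 - c) := by
      rw [List.suffix_iff_eq_drop] at hsub
      rw [hsub, hlt, hlenW]
    have e2 : (w₀ ++ (n+1) :: w₀).drop (2*n+1 - c) = w₀.drop (2*n+1 - c) ++ (n+1) :: w₀ := by
      rw [List.drop_append_of_le_length (by omega)]
    have hEq : w₀.drop (2*n+1 - c) ++ (n+1) :: w₀ = w ++ (n+1) :: w.take (c - (n+1)) := by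
      rw [← e2, ← e1, htc]
    have hcen := center_eq (fun y hy => hel₀ y (List.drop_subset _ _ hy))
      (fun y hy => hel y hy) hEq
    have hlen1 : (w₀.drop (2*n+1 - c)).length = w.length := by rw [hcen.1]
    rw [List.length_drop, lw₀, lw] at hlen1
    -- so c = 2n+1, whence w₀ = w
    have hc21 : c = 2*n+1 := by omega
    have : w₀.drop (2*n+1 - c) = w₀ := by rw [hc21]; simp
    exact hne (this ▸ hcen.1)
  set l := ov acc B with hl
  have htb : B.take l <:+ acc := ov_take_suffix acc B
  have hw₀suf : w₀ <:+ acc := by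
    refine List.IsSuffix.trans ?_ hsuf
    exact ⟨w₀ ++ [n+1], by simp⟩
  have hlt : (B.take l).length = l := by rw [List.length_take]; omega
  have hsufw₀ : B.take l <:+ w₀ := suffix_of_suffix_length_le htb hw₀suf (by omega)
  have hxeq : w₀ = w₀.take (n - l) ++ B.take l := by
    have := List.suffix_iff_eq_drop.mp hsufw₀
    rw [this, hlt, lw₀]
    exact (List.take_append_drop _ _).symm
  set x := w₀.take (n - l) with hx
  have haccdrop : acc.drop (acc.length - n) = w₀ := by
    have h := List.suffix_iff_eq_drop.mp hw₀suf
    rw [lw₀] at h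
    exact h.symm
  have hmerge : mergeOv acc B = acc ++ B.drop l := rfl
  have hxB : w₀ ++ B.drop l = x ++ B := by
    conv_lhs => rw [hxeq]
    rw [List.append_assoc, List.take_append_drop]
  have hsufB : B <:+ mergeOv acc B := by
    rw [hmerge]
    have heq2 : acc ++ B.drop l = (acc.take (acc.length - n) ++ x) ++ B := by
      conv_lhs => rw [← List.take_append_drop (acc.length - n) acc, haccdrop]
      rw [List.append_assoc, hxB, ← List.append_assoc]
    rw [heq2]
    exact ⟨_, rfl⟩
  constructor
  · rw [hmerge]
    rw [windows_append (by omega : 1 ≤ n+1) acc (B.drop l) (by simp; omega)]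
    have hn1 : n + 1 - 1 = n := by omega
    rw [hn1, haccdrop, hxB]
    have hwb := windows_block x w lw
    rw [hwb]
    unfold filterPerms
    rw [List.filter_append, List.filter_append]
    have hstrad : ((List.range x.length).map fun p =>
        (((x ++ w).drop p).take (n+1))).filter
          (fun v => decide (v.Perm (List.range' 1 (n+1)))) = [] := by
      rw [List.filter_eq_nil_iff]
      intro a ha
      simp only [List.mem_map, List.mem_range] at ha
      obtain ⟨p, hp, rfl⟩ := ha
      simp only [decide_eq_true_eq]
      intro hperm
      have hmem : n + 1 ∈ ((x ++ w).drop p).take (n+1) := by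
        rw [hperm.mem_iff, mem_range'_iff]; omega
      have hsub2 : n + 1 ∈ x ++ w :=
        List.drop_subset _ _ (List.take_subset _ _ hmem)
      rw [List.mem_append] at hsub2
      rcases hsub2 with h | h
      · have := hel₀ _ (List.take_subset _ _ h); omega
      · have := hel _ h; omega
    have hrot : ((List.range (n+1)).map fun i => w.drop i ++ (n+1) :: w.take i).filter
        (fun v => decide (v.Perm (List.range' 1 (n+1))))
        = (List.range (n+1)).map fun i => w.drop i ++ (n+1) :: w.take i := by
      rw [List.filter_eq_self]
      intro a ha
      simp only [List.mem_map, List.mem_range] at ha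
      obtain ⟨i, hi, rfl⟩ := ha
      simp only [decide_eq_true_eq]
      have h1 : (w.drop i ++ (n+1) :: w.take i).Perm ((n+1) :: (w.drop i ++ w.take i)) :=
        List.perm_middle
      have h2 : (w.drop i ++ w.take i).Perm (List.range' 1 n) := by
        rw [← List.rotate_eq_drop_append_take (by omega)]
        exact (List.rotate_perm w i).trans hw
      have h3 : ((n+1) :: List.range' 1 n).Perm (List.range' 1 (n+1)) := by
        have hr : List.range' 1 (n+1) = List.range' 1 n ++ [n+1] := by
          rw [List.range'_concat]; simp [Nat.add_comm]
        rw [hr]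
        exact (List.perm_append_singleton _ _).symm
      exact (h1.trans (h2.cons _)).trans h3
    rw [hstrad, hrot, List.nil_append]
    rfl
  · exact hsufB

lemma mergeOv_nil (t : List ℕ) : mergeOv [] t = t := by
  have h1 : List.range 1 = [0] := rfl
  simp [mergeOv, ov, h1, List.filter, List.isSuffixOf]

lemma permsOrder_nodup (N : ℕ) (s : List ℕ) : (permsOrder N s).Nodup :=
  List.nodup_reverse.mpr (List.nodup_dedup _)

lemma permsOrder_eq {N : ℕ} {s : List ℕ}
    (h : ((windows N s).filter fun v => decide (v.Perm (List.range' 1 N))).Nodup) :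
    permsOrder N s = (windows N s).filter fun v => decide (v.Perm (List.range' 1 N)) := by
  unfold permsOrder
  rw [List.Nodup.dedup (List.nodup_reverse.mpr h), List.reverse_reverse]

lemma rotWins_filter {n : ℕ} {w : List ℕ} (hw : w.Perm (List.range' 1 n)) :
    (rotWins n w).filter (fun v => decide (v.Perm (List.range' 1 (n+1)))) = rotWins n w := by
  have lw : w.length = n := by rw [hw.length_eq]; simp
  rw [List.filter_eq_self]
  intro a ha
  simp only [rotWins, List.mem_map, List.mem_range] at ha
  obtain ⟨i, hi, rfl⟩ := ha
  simp only [decide_eq_true_eq]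
  have h1 : (w.drop i ++ (n+1) :: w.take i).Perm ((n+1) :: (w.drop i ++ w.take i)) :=
    List.perm_middle
  have h2 : (w.drop i ++ w.take i).Perm (List.range' 1 n) := by
    rw [← List.rotate_eq_drop_append_take (by omega)]
    exact (List.rotate_perm w i).trans hw
  have h3 : ((n+1) :: List.range' 1 n).Perm (List.range' 1 (n+1)) := by
    have hr : List.range' 1 (n+1) = List.range' 1 n ++ [n+1] := by
      rw [List.range'_concat]; simp [Nat.add_comm]
    rw [hr]
    exact (List.perm_append_singleton _ _).symm
  exact (h1.trans (h2.cons _)).trans h3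

lemma rotWins_inj {n : ℕ} {v v' : List ℕ} (hv : v.Perm (List.range' 1 n))
    (hv' : v'.Perm (List.range' 1 n)) {i i' : ℕ} (hi : i ≤ n) (hi' : i' ≤ n)
    (h : v.drop i ++ (n+1) :: v.take i = v'.drop i' ++ (n+1) :: v'.take i') :
    i = i' ∧ v = v' := by
  have lv : v.length = n := by rw [hv.length_eq]; simp
  have lv' : v'.length = n := by rw [hv'.length_eq]; simp
  have hel : ∀ y ∈ v, y < n + 1 := by
    intro y hy; have := hv.subset hy; rw [mem_range'_iff] at this; omega
  have hel' : ∀ y ∈ v', y < n + 1 := by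
    intro y hy; have := hv'.subset hy; rw [mem_range'_iff] at this; omega
  have hc := center_eq (fun y hy => hel y (List.drop_subset _ _ hy))
    (fun y hy => hel' y (List.drop_subset _ _ hy)) h
  have hlen : v.length - i = v'.length - i' := by rw [← List.length_drop, ← List.length_drop, hc.1]
  have hii : i = i' := by omega
  refine ⟨hii, ?_⟩
  have : v.take i ++ v.drop i = v'.take i' ++ v'.drop i' := by rw [hc.1, hc.2]
  rwa [List.take_append_drop, List.take_append_drop] at this

lemma flat_nodup {n : ℕ} (bs : List (List ℕ))
    (hperm : ∀ v ∈ bs, v.Perm (List.range' 1 n)) (hnd : bs.Nodup) :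
    (bs.flatMap (rotWins n)).Nodup := by
  rw [List.nodup_flatMap]
  constructor
  · intro v hv
    apply List.Nodup.map_on _ List.nodup_range
    intro i hi j hj hf
    rw [List.mem_range] at hi hj
    exact (rotWins_inj (hperm v hv) (hperm v hv) (by omega) (by omega) hf).1
  · have : ∀ v ∈ bs, ∀ v' ∈ bs, v ≠ v' → List.Disjoint (rotWins n v) (rotWins n v') := by
      intro v hv v' hv' hne a ha ha'
      simp only [rotWins, List.mem_map, List.mem_range] at ha ha'
      obtain ⟨i, hi, rfl⟩ := ha
      obtain ⟨i', hi', he⟩ := ha'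
      exact hne (rotWins_inj (hperm v hv) (hperm v' hv') (by omega) (by omega) he.symm).2
    exact List.Pairwise.imp_of_mem (fun {a b} ha hb hne => this a ha b hb hne) hnd

lemma canon_perm {n : ℕ} : ∀ v ∈ canon n, v.Perm (List.range' 1 n) := by
  intro v hv
  simp only [canon, List.mem_map] at hv
  obtain ⟨m, _, rfl⟩ := hv
  exact word_perm n _

lemma range_mul (a b : ℕ) :
    List.range (a * b) = (List.range a).flatMap fun m => (List.range b).map fun i => m * b + i := by
  induction a with
  | zero => simp
  | succ a ih =>
    have h1 : (a + 1) * b = a * b + b := by ring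
    rw [h1, List.range_add, ih, List.range_succ, List.flatMap_append]
    simp

lemma canon_succ {n : ℕ} (hn : 1 ≤ n) : canon (n+1) = (canon n).flatMap (rotWins n) := by
  unfold canon
  have hfact : (n+1).factorial = n.factorial * (n+1) := by rw [Nat.factorial_succ]; ring
  rw [hfact, range_mul, List.map_flatMap, List.flatMap_map]
  apply List.flatMap_congr
  intro m _
  rw [List.map_map]
  unfold rotWins
  apply List.map_congr_left
  intro i hi
  rw [List.mem_range] at hi
  simp only [Function.comp]
  set e := fdig (n+1) (m*(n+1)+i) with he_def
  have he : e (n+1) = i := by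
    rw [he_def]
    unfold fdig
    rw [Nat.div_self (Nat.factorial_pos _), Nat.div_one, mul_comm m (n+1), Nat.mul_add_mod,
      Nat.mod_eq_of_lt hi]
  have hw1 : word (n+1) e = (word n e).drop i ++ (n+1) :: (word n e).take i := by
    rw [word_succ hn e (by rw [he]; omega), he]
  have hw2 : word n e = word n (fdig n m) := by
    apply word_congr
    intro i' h2 hin
    rw [he_def]
    unfold fdig
    rw [fdiv_succ hin, mul_comm (n.factorial / i'.factorial) (n+1), ← Nat.div_div_eq_div_mul,
      mul_comm m (n+1), Nat.mul_add_div (by omega), Nat.div_eq_of_lt hi, add_zero]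
  rw [hw1, hw2]

lemma foldl_lemma {n : ℕ} (hn : 1 ≤ n) :
    ∀ (ws : List (List ℕ)) (acc w₀ : List ℕ),
      (∀ v ∈ w₀ :: ws, v.Perm (List.range' 1 n)) → (w₀ :: ws).Nodup →
      (w₀ ++ (n+1) :: w₀) <:+ acc →
      filterPerms (n+1) (windows (n+1)
          (List.foldl mergeOv acc (ws.map fun v => v ++ (n+1) :: v)))
        = filterPerms (n+1) (windows (n+1) acc) ++ ws.flatMap (rotWins n) := by
  intro ws
  induction ws with
  | nil => intro acc w₀ _ _ _; simp
  | cons w ws ih =>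
    intro acc w₀ hperm hnd hsuf
    have hne : w₀ ≠ w := by
      have := hnd
      rw [List.nodup_cons] at this
      intro h
      exact this.1 (h ▸ List.mem_cons_self)
    have hos := one_step hn acc w₀ w (hperm w₀ (List.mem_cons_self))
      (hperm w (List.mem_cons_of_mem _ (List.mem_cons_self))) hne hsuf
    rw [List.map_cons, List.foldl_cons]
    rw [ih (mergeOv acc (w ++ (n+1) :: w)) w
      (fun v hv => hperm v (by
        rcases hv with _ | hv
        · exact List.mem_cons_of_mem _ (List.mem_cons_self)
        · exact List.mem_cons_of_mem _ (List.mem_cons_of_mem _ (by assumption))))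
      (hnd.of_cons) hos.2]
    rw [hos.1, List.flatMap_cons, List.append_assoc]

theorem perms_canon : ∀ n, 2 ≤ n → permsOrder n (Mrec n) = canon n := by
  intro n hn
  induction n, hn using Nat.le_induction with
  | base => decide
  | succ n hn ih =>
    have hn1 : 1 ≤ n := by omega
    have hMrec : Mrec (n+1)
        = ((permsOrder n (Mrec n)).map fun P => P ++ [n+1] ++ P).foldl mergeOv [] := by
      obtain ⟨m, rfl⟩ : ∃ m, n = m + 1 := ⟨n-1, by omega⟩
      rfl
    have hmapeq : ((canon n).map fun P => P ++ [n+1] ++ P)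
        = (canon n).map fun P => P ++ (n+1) :: P := by
      apply List.map_congr_left; intro P _; simp
    rw [hMrec, ih, hmapeq]
    have hperm := @canon_perm n
    have hnd : (canon n).Nodup := ih ▸ permsOrder_nodup n (Mrec n)
    have hcnil : canon n ≠ [] := by
      intro h
      have := congrArg List.length h
      simp [canon] at this
      exact absurd this (Nat.factorial_pos n).ne'
    obtain ⟨w₀, ws, hc⟩ : ∃ w₀ ws, canon n = w₀ :: ws := by
      cases h : canon n with
      | nil => exact absurd h hcnil
      | cons a l => exact ⟨a, l, rfl⟩
    rw [hc, List.map_cons, List.foldl_cons, mergeOv_nil]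
    have hperm' : ∀ v ∈ w₀ :: ws, v.Perm (List.range' 1 n) := hc ▸ hperm
    have hnd' : (w₀ :: ws).Nodup := hc ▸ hnd
    have hw₀ : w₀.Perm (List.range' 1 n) := hperm' w₀ (List.mem_cons_self)
    have lw₀ : w₀.length = n := by rw [hw₀.length_eq]; simp
    have hFold := foldl_lemma hn1 ws (w₀ ++ (n+1) :: w₀) w₀ hperm' hnd' (List.suffix_refl _)
    -- windows of the first block
    have hWB : windows (n+1) (w₀ ++ (n+1) :: w₀)
        = (List.range (n+1)).map fun i => w₀.drop i ++ (n+1) :: w₀.take i := by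
      have := windows_block [] w₀ lw₀
      simpa using this
    have hF : filterPerms (n+1) (windows (n+1) (w₀ ++ (n+1) :: w₀)) = rotWins n w₀ := by
      rw [hWB]
      exact rotWins_filter hw₀
    rw [hF] at hFold
    have hL : filterPerms (n+1) (windows (n+1)
        (List.foldl mergeOv (w₀ ++ (n+1) :: w₀) (ws.map fun v => v ++ (n+1) :: v)))
        = (canon n).flatMap (rotWins n) := by
      rw [hFold, hc, List.flatMap_cons]
    have hLnd : ((canon n).flatMap (rotWins n)).Nodup := flat_nodup _ hperm hnd
    rw [permsOrder_eq (by rw [show ((windows (n+1) (List.foldl mergeOv (w₀ ++ (n+1) :: w₀)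
        (ws.map fun v => v ++ (n+1) :: v))).filter
          fun v => decide (v.Perm (List.range' 1 (n+1))))
        = (canon n).flatMap (rotWins n) from hL]; exact hLnd)]
    rw [show ((windows (n+1) (List.foldl mergeOv (w₀ ++ (n+1) :: w₀)
        (ws.map fun v => v ++ (n+1) :: v))).filter
          fun v => decide (v.Perm (List.range' 1 (n+1))))
        = (canon n).flatMap (rotWins n) from hL]
    exact (canon_succ hn1).symm

theorem stmt19 (n k : ℕ) (h2 : 2 ≤ k) (hk : k < n) (j : ℕ) (hj : j < Nat.factorial k)
    (d : ℕ → ℕ) (hd : ∀ i ∈ Finset.Icc 2 k, d i < i)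
    (hsum : j = ∑ i ∈ Finset.Icc 2 k, d i * (Nat.factorial k / Nat.factorial i))
    (w : List ℕ) :
    w ∈ (((permsOrder n (Mrec n)).drop (j * (Nat.factorial n / Nat.factorial k))).take
        (Nat.factorial n / Nat.factorial k)) ↔
      ∃ e : ℕ → ℕ, (∀ i ∈ Finset.Icc 2 n, e i < i) ∧ (∀ i ∈ Finset.Icc 2 k, e i = d i) ∧
        w = (List.range' 1 n).map fun x => circProd n e x := by
  have EQ := perms_canon n (by omega)
  set q := Nat.factorial n / Nat.factorial k with hq
  have hdvd : Nat.factorial k ∣ Nat.factorial n := Nat.factorial_dvd_factorial (le_of_lt hk)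
  have hqk : q * Nat.factorial k = Nat.factorial n := Nat.div_mul_cancel hdvd
  have hqpos : 0 < q :=
    Nat.div_pos (Nat.factorial_le (le_of_lt hk)) (Nat.factorial_pos k)
  have hcl : (canon n).length = n.factorial := by simp [canon]
  have hsliceub : j * q + q ≤ n.factorial := by
    have h1 : j * q + q = (j + 1) * q := by ring
    have h2' : (j + 1) * q ≤ Nat.factorial k * q := Nat.mul_le_mul_right _ (by omega)
    rw [h1]
    calc (j+1) * q ≤ Nat.factorial k * q := h2'
      _ = q * Nat.factorial k := by ring
      _ = Nat.factorial n := hqk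
  have hslice_len : (((canon n).drop (j * q)).take q).length = q := by
    rw [List.length_take, List.length_drop, hcl]; omega
  have hcanon_get : ∀ (M : ℕ) (h : M < n.factorial),
      (canon n)[M]'(by rw [hcl]; exact h) = word n (fdig n M) := by
    intro M h
    simp [canon]
  rw [EQ]
  constructor
  · intro hmem
    rw [List.mem_iff_getElem] at hmem
    obtain ⟨p, hp, hval⟩ := hmem
    have hplt : p < q := by rw [hslice_len] at hp; exact hp
    have hidx : j * q + p < n.factorial := by omega
    have hval' : word n (fdig n (j * q + p)) = w := by
      rw [← hval, List.getElem_take, List.getElem_drop, hcanon_get _ hidx]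
    refine ⟨fdig n (j * q + p), ?_, ?_, ?_⟩
    · intro i hi
      simp only [Finset.mem_Icc] at hi
      exact Nat.mod_lt _ (by omega)
    · intro i hi
      simp only [Finset.mem_Icc] at hi
      show (j * q + p) / (n.factorial / i.factorial) % i = d i
      rw [fdiv_mul hi.2 (le_of_lt hk), ← hq, ← Nat.div_div_eq_div_mul]
      have hjq : (j * q + p) / q = j := by
        rw [mul_comm j q, Nat.mul_add_div hqpos, Nat.div_eq_of_lt hplt, add_zero]
      rw [hjq]
      have hfd := fact_digits k d hd i (Finset.mem_Icc.mpr hi)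
      rw [← hsum] at hfd
      exact hfd
    · exact hval'.symm
  · rintro ⟨e, he, hek, hwe⟩
    set m := ∑ i ∈ Finset.Icc 2 n, e i * (n.factorial / i.factorial) with hm
    set r := ∑ i ∈ Finset.Ioc k n, e i * (n.factorial / i.factorial) with hr_def
    have hsplit : m = q * j + r := by
      rw [hm, show Finset.Icc 2 n = Finset.Ioc 1 n from (Finset.Icc_add_one_left_eq_Ioc 1 n),
        ← Finset.sum_Ioc_consecutive _ (show (1:ℕ) ≤ k by omega) (le_of_lt hk)]
      congr 1
      rw [← Finset.Icc_add_one_left_eq_Ioc, hsum, Finset.mul_sum]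
      apply Finset.sum_congr rfl
      intro i hi
      simp only [Finset.mem_Icc] at hi
      rw [hek i (Finset.mem_Icc.mpr hi), fdiv_mul hi.2 (le_of_lt hk), ← hq]
      ring
    have hsplit2 : m = j * q + r := by rw [hsplit, mul_comm q j]
    have hrq : r < q := by
      rw [hr_def, hq]
      exact gen_sum_lt k e n (le_of_lt hk)
        (fun i hi => he i (by
          simp only [Finset.mem_Ioc] at hi
          simp only [Finset.mem_Icc]
          omega))
    have hmlt : m < n.factorial := by omega
    have hjqm : j * q ≤ m := by omega
    have hwords : word n (fdig n m) = word n e := by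
      apply word_congr
      intro i hi2 hin
      have := fact_digits n e he i (Finset.mem_Icc.mpr ⟨hi2, hin⟩)
      rw [← hm] at this
      exact this
    rw [List.mem_iff_getElem]
    refine ⟨m - j * q, by rw [hslice_len]; omega, ?_⟩
    rw [List.getElem_take, List.getElem_drop,
      hcanon_get _ (by omega : j * q + (m - j * q) < n.factorial)]
    have hmm : j * q + (m - j * q) = m := by omega
    rw [hmm]  -- may fail inside dependent getElem; handled above by hcanon_get applied to the sum
    rw [hwords, hwe]
    rfl
end
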